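/- arXiv:1311.0372 — 5 statements merged into one kernel-verified Lean document; each statement's English description precedes it below -/
import Mathlib

section
/- For A ∈ ℂ with Im A > 0, the zero ζ₋(A) = (1 − √(A+1))² lies in the open lower half-plane if and only if (Im A)² < −4·Re A, where √ denotes the principal branch of the square root. -/
open Filter

/-- Principal square root on `ℂ`. -/
noncomputable def sqrtc (z : ℂ) : ℂ := z ^ ((1 : ℂ) / 2)

/-- The root `ζ₊(A) = (1 + √(A+1))²` of `D_A(z) = (z−A)² − 4z`. -/
noncomputable def zetaP (A : ℂ) : ℂ := (1 + sqrtc (A + 1)) ^ 2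

/-- The root `ζ₋(A) = (1 − √(A+1))²` of `D_A(z) = (z−A)² − 4z`. -/
noncomputable def zetaM (A : ℂ) : ℂ := (1 - sqrtc (A + 1)) ^ 2

/-- For `Im A > 0`, `ζ₋(A)` lies in the open lower half-plane iff `(Im A)² < −4·Re A`. -/
theorem zetaM_lower_half_iff (A : ℂ) (hA : 0 < A.im) :
    (zetaM A).im < 0 ↔ A.im ^ 2 < -4 * A.re := by
  have hz : A + 1 ≠ 0 := by
    intro h
    have := congrArg Complex.im h
    simp at this
    linarith
  have hw2 : sqrtc (A + 1) ^ 2 = A + 1 := by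
    rw [sqrtc, sq, ← Complex.cpow_add _ _ hz]
    norm_num
  set a := A.re with ha
  set b := A.im with hb
  set r := ‖A + 1‖ with hr
  have hrsq : r ^ 2 = (a + 1) ^ 2 + b ^ 2 := by
    rw [hr, Complex.sq_norm, Complex.normSq_apply]
    simp [ha, hb]
    ring
  have hrle : a + 1 ≤ r := by
    have := Complex.abs_re_le_norm (A + 1)
    have h2 : (A + 1).re = a + 1 := by simp [ha]
    rw [h2] at this
    exact (le_abs_self _).trans this
  have hq : (sqrtc (A + 1)).im = Real.sqrt ((r - (a + 1)) / 2) := by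
    rw [sqrtc, show (1 : ℂ) / 2 = (2 : ℂ)⁻¹ by norm_num,
      Complex.cpow_inv_two_im_eq_sqrt (by simp [hb]; linarith)]
    simp [ha, hr]
  set q := (sqrtc (A + 1)).im with hqdef
  have hq0 : 0 ≤ q := hq ▸ Real.sqrt_nonneg _
  have hq2 : q ^ 2 = (r - (a + 1)) / 2 := by
    rw [hq, Real.sq_sqrt (by linarith)]
  have hzm : zetaM A = A + 2 - 2 * sqrtc (A + 1) := by
    rw [zetaM]; linear_combination hw2
  have him : (zetaM A).im = b - 2 * q := by
    rw [hzm]; simp [hb, hqdef]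
  rw [him]
  constructor
  · intro h
    have h1 : b ^ 2 < 4 * q ^ 2 := by nlinarith
    have h2 : b ^ 2 + 2 * (a + 1) < 2 * r := by rw [hq2] at h1; linarith
    have hr0 : 0 ≤ r := norm_nonneg _
    nlinarith [sq_nonneg (b ^ 2 + 2 * a + 2), sq_nonneg b, sq_nonneg (b * b)]
  · intro h
    have hr0 : 0 ≤ r := norm_nonneg _
    have hbb : 0 < b ^ 2 := by positivity
    have hd : 0 < b ^ 2 * (-4 * a - b ^ 2) := mul_pos hbb (by linarith)
    have key : b ^ 2 + 2 * (a + 1) < 2 * r := by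
      by_contra hcon
      push_neg at hcon
      have ht : 0 ≤ b ^ 2 + 2 * a + 2 - 2 * r := by linarith
      nlinarith [mul_nonneg ht (by linarith : (0 : ℝ) ≤ b ^ 2 + 2 * a + 2 + 2 * r)]
    have h1 : b ^ 2 < 4 * q ^ 2 := by rw [hq2]; linarith
    nlinarith
end

section
/- The map A ↦ ζ₊(A) = (1 + √(A+1))², with √ the principal square root, is injective and holomorphic on the open upper half-plane {Im A > 0}, and maps it into the open upper half-plane. -/
open Filter

lemma sqrtc_pos_quadrant {z : ℂ} (hz : 0 < z.im) :
    0 < (sqrtc z).re ∧ 0 < (sqrtc z).im := by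
  have hz0 : z ≠ 0 := by
    intro h; rw [h] at hz; simp at hz
  have harg_pos : 0 < Complex.arg z := by
    rcases lt_or_eq_of_le (Complex.arg_nonneg_iff.mpr hz.le) with h | h
    · exact h
    · exact absurd (Complex.arg_eq_zero_iff.mp h.symm).2 hz.ne'
  have harg_lt : Complex.arg z < Real.pi :=
    Complex.arg_lt_pi_iff.mpr (Or.inr hz.ne')
  have hsq : sqrtc z = Complex.exp (Complex.log z * (1 / 2)) := by
    rw [sqrtc, Complex.cpow_def_of_ne_zero hz0]
  have him : (Complex.log z * (1 / 2 : ℂ)).im = Complex.arg z / 2 := by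
    simp [Complex.mul_im, Complex.log_im]; ring
  have hpi : (0 : ℝ) < Real.pi := Real.pi_pos
  have hcos : 0 < Real.cos (Complex.arg z / 2) :=
    Real.cos_pos_of_mem_Ioo ⟨by linarith, by linarith⟩
  have hsin : 0 < Real.sin (Complex.arg z / 2) :=
    Real.sin_pos_of_pos_of_lt_pi (by linarith) (by linarith)
  rw [hsq]
  rw [Complex.exp_re, Complex.exp_im, him]
  exact ⟨mul_pos (Real.exp_pos _) hcos, mul_pos (Real.exp_pos _) hsin⟩

lemma sqrtc_sq {z : ℂ} (hz : z ≠ 0) : (sqrtc z) ^ 2 = z := by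
  have : sqrtc z = z ^ (((2 : ℕ) : ℂ))⁻¹ := by norm_num [sqrtc]
  rw [this, Complex.cpow_nat_inv_pow z (two_ne_zero)]

/-- `A ↦ ζ₊(A)` is injective and holomorphic on the open upper half-plane and maps it
into the open upper half-plane. -/
theorem zetaP_conformal :
    Set.InjOn zetaP {z : ℂ | 0 < z.im} ∧
      DifferentiableOn ℂ zetaP {z : ℂ | 0 < z.im} ∧
      Set.MapsTo zetaP {z : ℂ | 0 < z.im} {z : ℂ | 0 < z.im} := by
  refine ⟨?_, ?_, ?_⟩
  · -- injectivity
    intro A hA B hB h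
    have hA1 : (0 : ℝ) < (A + 1).im := by simpa using hA
    have hB1 : (0 : ℝ) < (B + 1).im := by simpa using hB
    obtain ⟨hAre, hAim⟩ := sqrtc_pos_quadrant hA1
    obtain ⟨hBre, hBim⟩ := sqrtc_pos_quadrant hB1
    have hsum : (1 + sqrtc (A + 1)) + (1 + sqrtc (B + 1)) ≠ 0 := by
      intro h0
      have : ((1 + sqrtc (A + 1)) + (1 + sqrtc (B + 1))).re = 0 := by rw [h0]; simp
      simp [Complex.add_re] at this
      linarith
    have heq : 1 + sqrtc (A + 1) = 1 + sqrtc (B + 1) := by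
      have h2 : ((1 + sqrtc (A + 1)) - (1 + sqrtc (B + 1))) *
          ((1 + sqrtc (A + 1)) + (1 + sqrtc (B + 1))) = 0 := by
        have := h
        simp only [zetaP] at this
        ring_nf
        ring_nf at this
        linear_combination this
      rcases mul_eq_zero.mp h2 with h3 | h3
      · exact sub_eq_zero.mp h3
      · exact absurd h3 hsum
    have hs : sqrtc (A + 1) = sqrtc (B + 1) := by
      have := heq
      linear_combination this
    have hA0 : (A + 1) ≠ 0 := by
      intro h0; rw [h0] at hA1; simp at hA1
    have hB0 : (B + 1) ≠ 0 := by
      intro h0; rw [h0] at hB1; simp at hB1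
    have : A + 1 = B + 1 := by
      rw [← sqrtc_sq hA0, ← sqrtc_sq hB0, hs]
    linear_combination this
  · -- differentiability
    intro A hA
    have hA1 : (0 : ℝ) < (A + 1).im := by simpa using hA
    have hmem : (A + 1) ∈ Complex.slitPlane := Or.inr hA1.ne'
    have hdiff : DifferentiableAt ℂ (fun z : ℂ => sqrtc (z + 1)) A := by
      have := (differentiableAt_id.add_const 1).cpow
        (differentiableAt_const ((1 : ℂ) / 2)) (by simpa using hmem)
      simpa [sqrtc] using this
    exact (((differentiableAt_const 1).add hdiff).pow 2).differentiableWithinAt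
  · -- maps to
    intro A hA
    have hA1 : (0 : ℝ) < (A + 1).im := by simpa using hA
    obtain ⟨hre, him⟩ := sqrtc_pos_quadrant hA1
    simp only [Set.mem_setOf_eq, zetaP]
    have : ((1 + sqrtc (A + 1)) ^ 2).im =
        2 * (1 + (sqrtc (A + 1)).re) * (sqrtc (A + 1)).im := by
      simp [pow_two, Complex.mul_im, Complex.add_re, Complex.add_im]
      ring
    rw [this]
    have : 0 < 1 + (sqrtc (A + 1)).re := by linarith
    positivity
end

section
/- Let A ∈ ℂ ∖ [−1,∞). There is no x > 0 such that 1 − 4x/(x − A)² is a nonpositive real number. Equivalently, for all x > 0 and all r ∈ [0,1), one has x² − 2(A + 2r)x + A² ≠ 0. -/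
lemma key_no_nonpositive (A : ℂ) (hA : ¬(A.im = 0 ∧ -1 ≤ A.re)) (x s : ℝ)
    (hx : 0 < x) (hs0 : 0 ≤ s) (hs1 : s ≤ 1) :
    ((x : ℂ) - A) ^ 2 ≠ 4 * (s : ℂ) * (x : ℂ) := by
  intro h
  have hnn : (0:ℝ) ≤ 4 * s * x := by positivity
  set u := Real.sqrt (4 * s * x) with hu
  have hu0 : 0 ≤ u := Real.sqrt_nonneg _
  have hu2 : u ^ 2 = 4 * s * x := Real.sq_sqrt hnn
  have hprod : ((x : ℂ) - A - u) * ((x : ℂ) - A + u) = 0 := by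
    have : ((x : ℂ) - A - u) * ((x : ℂ) - A + u) = ((x:ℂ) - A)^2 - (u:ℂ)^2 := by ring
    rw [this, h]
    have : ((u:ℂ))^2 = ((4 * s * x : ℝ) : ℂ) := by
      rw [← hu2]; push_cast; ring
    rw [this]; push_cast; ring
  have hub : x + s - u ≥ 0 := by
    nlinarith [sq_nonneg (x - s), sq_nonneg (x + s - u), sq_nonneg u, hu2]
  rcases mul_eq_zero.mp hprod with h1 | h1
  · have hAeq : A = ((x - u : ℝ) : ℂ) := by
      push_cast
      linear_combination -h1
    apply hA
    constructor
    · rw [hAeq]; simp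
    · rw [hAeq]
      simp only [Complex.ofReal_re]
      linarith
  · have hAeq : A = ((x + u : ℝ) : ℂ) := by
      push_cast
      linear_combination -h1
    apply hA
    constructor
    · rw [hAeq]; simp
    · rw [hAeq]
      simp only [Complex.ofReal_re]
      linarith

/-- For `A ∈ ℂ ∖ [−1,∞)` there is no `x > 0` with `1 − 4x/(x−A)²` a nonpositive real;
equivalently, for all `x > 0` and `r ∈ [0,1)`, `x² − 2(A+2r)x + A² ≠ 0`. -/
theorem no_nonpositive_value (A : ℂ) (hA : ¬(A.im = 0 ∧ -1 ≤ A.re)) :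
    (¬ ∃ x : ℝ, 0 < x ∧ ∃ c : ℝ, c ≤ 0 ∧
        1 - 4 * (x : ℂ) / ((x : ℂ) - A) ^ 2 = (c : ℂ)) ∧
    (∀ x : ℝ, 0 < x → ∀ r : ℝ, 0 ≤ r → r < 1 →
        (x : ℂ) ^ 2 - 2 * (A + 2 * (r : ℂ)) * (x : ℂ) + A ^ 2 ≠ 0) := by
  constructor
  · rintro ⟨x, hx, c, hc, heq⟩
    have hne : ((x : ℂ) - A) ^ 2 ≠ 0 := by
      have := key_no_nonpositive A hA x 0 hx le_rfl zero_le_one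
      simpa using this
    have h1c : (0:ℝ) < 1 - c := by linarith
    set s := 1 / (1 - c) with hs
    have hs0 : 0 ≤ s := by positivity
    have hs1 : s ≤ 1 := by
      rw [hs, div_le_one h1c]; linarith
    apply key_no_nonpositive A hA x s hx hs0 hs1
    have h2 : ((1 : ℂ) - c) * ((x:ℂ) - A)^2 = 4 * x := by
      have := heq
      field_simp at this
      have hd : 4 * (x:ℂ) / ((x:ℂ) - A)^2 * ((x:ℂ) - A)^2 = 4 * x := div_mul_cancel₀ _ hne
      linear_combination (((x:ℂ) - A)^2) * heq + hd
    have hcne : ((1:ℂ) - c) ≠ 0 := by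
      intro h
      have : ((1 - c : ℝ) : ℂ) = 0 := by push_cast; linear_combination h
      exact absurd (Complex.ofReal_eq_zero.mp this) (by linarith)
    have hsC : ((s : ℝ) : ℂ) = 1 / (1 - (c : ℂ)) := by
      rw [hs]; push_cast; ring
    rw [hsC]
    field_simp
    linear_combination h2
  · intro x hx r hr0 hr1 heq
    apply key_no_nonpositive A hA x r hx hr0 hr1.le
    linear_combination heq
end

section
/- Let A ∈ ℂ with Im A > 0, and let f(z) = √(D_A(z))/(z − A) be the branch of √(1 − 4z/(z−A)²) on a neighborhood of [0,∞) in ℂ that is holomorphic along the positive real axis and satisfies f(x) → 1 as x → +∞ along ℝ. Then f(0) = 1; equivalently, the branch of √(D_A(z)) normalized by √(D_A(z))/z → 1 at infinity, continued along the positive real axis to 0, satisfies √(D_A(0)) = −A. -/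
open Filter

lemma slit (A : ℂ) (hA : 0 < A.im) (x : ℝ) (hx : 0 ≤ x) :
    (1 - 4 * (x : ℂ) / ((x : ℂ) - A) ^ 2) ∈ Complex.slitPlane := by
  have hd : ((x:ℂ) - A) ≠ 0 := by
    intro h
    have : (x:ℂ) = A := by linear_combination h
    have := congrArg Complex.im this
    simp at this
    linarith [this ▸ hA]
  have hd2 : ((x:ℂ) - A)^2 ≠ 0 := pow_ne_zero _ hd
  rw [Complex.mem_slitPlane_iff]
  by_contra hcon
  push_neg at hcon
  obtain ⟨h1, h2⟩ := hcon
  set w := 1 - 4 * (x : ℂ) / ((x : ℂ) - A) ^ 2 with hw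
  have hwre : w = (w.re : ℂ) := by
    apply Complex.ext <;> simp [h2]
  have key : (4*(x:ℝ) : ℂ) = (1 - (w.re:ℂ)) * ((x:ℂ)-A)^2 := by
    have : 4 * (x:ℂ) / ((x:ℂ)-A)^2 = 1 - w := by rw [hw]; ring
    field_simp at this
    rw [← hwre]
    linear_combination this
  set a := A.re; set b := A.im; set t := w.re
  have him : (((x:ℂ)-A)^2).im = -2*(x - a)*b := by
    simp [pow_two, Complex.mul_im]; ring
  have hre : (((x:ℂ)-A)^2).re = (x-a)^2 - b^2 := by
    simp [pow_two, Complex.mul_re]; rfl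
  have e1 := congrArg Complex.im key
  have e2 := congrArg Complex.re key
  simp [Complex.mul_im, Complex.mul_re, him, hre] at e1 e2
  rcases e1 with h | h | h
  · linarith
  · have hxa : x = a := by linarith
    rw [hxa] at e2 hx
    nlinarith [mul_pos (show (0:ℝ) < 1 - t by linarith) (mul_pos hA hA)]
  · linarith

lemma aux_ivt (u v : ℝ → ℂ) (hu : ContinuousOn u (Set.Ici 0)) (hv : ContinuousOn v (Set.Ici 0))
    (hv0 : ∀ x ∈ Set.Ici (0:ℝ), v x ≠ 0)
    (hsq : ∀ x ∈ Set.Ici (0:ℝ), u x ^ 2 = v x ^ 2)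
    (hlim : Tendsto (fun x => u x / v x) atTop (nhds 1)) : u 0 = v 0 := by
  set q := fun x => u x / v x with hqdef
  have hq : ContinuousOn q (Set.Ici 0) := hu.div hv hv0
  have hqpm : ∀ x ∈ Set.Ici (0:ℝ), q x = 1 ∨ q x = -1 := by
    intro x hx
    have hsq1 : q x ^ 2 = 1 := by
      have := hsq x hx
      show (u x / v x) ^ 2 = 1
      rw [div_pow, this, div_self (pow_ne_zero _ (hv0 x hx))]
    have : (q x - 1) * (q x + 1) = 0 := by linear_combination hsq1
    rcases mul_eq_zero.mp this with h | h
    · left; linear_combination h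
    · right; linear_combination h
  have hev : ∀ᶠ x in atTop, 0 < (q x).re ∧ (0:ℝ) ≤ x := by
    have hre : Tendsto (fun x => (q x).re) atTop (nhds 1) := by
      have := (Complex.continuous_re.tendsto 1).comp hlim
      exact this
    exact (hre.eventually (eventually_gt_nhds one_pos)).and (eventually_ge_atTop 0)
  obtain ⟨M, hM⟩ := hev.exists
  have hqM : q M = 1 := by
    rcases hqpm M hM.2 with h | h
    · exact h
    · exfalso; rw [h] at hM; simp at hM; linarith [hM.1]
  have hqz : q 0 = 1 := by
    by_contra hne
    have hq0 : q 0 = -1 := (hqpm 0 Set.self_mem_Ici).resolve_left hne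
    have hcont : ContinuousOn (fun x => (q x).re) (Set.Icc 0 M) :=
      Complex.continuous_re.comp_continuousOn (hq.mono (Set.Icc_subset_Ici_self))
    have hmem : (0:ℝ) ∈ Set.Icc ((q 0).re) ((q M).re) := by
      rw [hq0, hqM]; simp
    obtain ⟨c, hc, hc0⟩ := intermediate_value_Icc hM.2 hcont hmem
    rcases hqpm c (Set.Icc_subset_Ici_self hc) with h | h <;> simp only [h] at hc0 <;> simp at hc0
  have := hqz
  rw [hqdef] at this
  simp only at this
  exact (div_eq_one_iff_eq (hv0 0 Set.self_mem_Ici)).mp this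

/-- Let `Im A > 0`. If `f` is a continuous branch of `√(1 − 4x/(x−A)²)` along `[0,∞)`
with `f(x) → 1` as `x → +∞`, then `f(0) = 1`; equivalently, if `g` is a continuous branch
of `√((x−A)² − 4x)` along `[0,∞)` with `g(x)/x → 1` as `x → +∞`, then `g(0) = −A`. -/
theorem branch_value_at_zero (A : ℂ) (hA : 0 < A.im) (f g : ℝ → ℂ)
    (hf : ContinuousOn f (Set.Ici 0))
    (hf2 : ∀ x ∈ Set.Ici (0 : ℝ), f x ^ 2 = 1 - 4 * (x : ℂ) / ((x : ℂ) - A) ^ 2)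
    (hflim : Tendsto f atTop (nhds 1))
    (hg : ContinuousOn g (Set.Ici 0))
    (hg2 : ∀ x ∈ Set.Ici (0 : ℝ), g x ^ 2 = ((x : ℂ) - A) ^ 2 - 4 * (x : ℂ))
    (hglim : Tendsto (fun x : ℝ => g x / (x : ℂ)) atTop (nhds 1)) :
    f 0 = 1 ∧ g 0 = -A := by
  have hd : ∀ x : ℝ, ((x:ℂ) - A) ≠ 0 := by
    intro x h
    have : (x:ℂ) = A := by linear_combination h
    have h2 := congrArg Complex.im this
    simp at h2
    linarith [h2 ▸ hA]
  have hd2 : ∀ x : ℝ, ((x:ℂ) - A)^2 ≠ 0 := fun x => pow_ne_zero _ (hd x)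
  set w := fun x : ℝ => 1 - 4 * (x : ℂ) / ((x : ℂ) - A) ^ 2 with hwdef
  have hwslit : ∀ x ∈ Set.Ici (0:ℝ), w x ∈ Complex.slitPlane := fun x hx => slit A hA x hx
  have hw0 : ∀ x ∈ Set.Ici (0:ℝ), w x ≠ 0 := fun x hx =>
    Complex.slitPlane_ne_zero (hwslit x hx)
  have hwc : Continuous w := by
    apply continuous_const.sub
    exact Continuous.div (by continuity) (by continuity) (fun x => hd2 x)
  set s := fun x : ℝ => (w x) ^ ((1/2 : ℂ)) with hsdef
  have hsc : ContinuousOn s (Set.Ici 0) := by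
    intro x hx
    exact ((continuousAt_cpow_const (hwslit x hx)).comp hwc.continuousAt).continuousWithinAt
  have hs2 : ∀ x ∈ Set.Ici (0:ℝ), s x ^ 2 = w x := by
    intro x hx
    rw [hsdef]
    simp only
    rw [sq, ← Complex.cpow_add _ _ (hw0 x hx)]
    norm_num
  have hs_ne : ∀ x ∈ Set.Ici (0:ℝ), s x ≠ 0 := by
    intro x hx h
    apply hw0 x hx
    rw [← hs2 x hx, h]
    ring
  have hw00 : w 0 = 1 := by
    simp [hwdef]
  have hs0 : s 0 = 1 := by
    rw [hsdef]; simp only; rw [hw00, Complex.one_cpow]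
  have hwlim : Tendsto w atTop (nhds 1) := by
    have h2 : Tendsto (fun x => f x ^ 2) atTop (nhds 1) := by
      simpa using hflim.pow 2
    apply h2.congr'
    filter_upwards [eventually_ge_atTop (0:ℝ)] with x hx
    exact hf2 x hx
  have hslim : Tendsto s atTop (nhds 1) := by
    have hc1 : ContinuousAt (fun z : ℂ => z ^ (1/2:ℂ)) 1 :=
      continuousAt_cpow_const (by simp [Complex.mem_slitPlane_iff])
    have := hc1.tendsto.comp hwlim
    simpa [Function.comp_def, Complex.one_cpow, hsdef] using this
  -- f part
  have hf0 : f 0 = 1 := by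
    have := aux_ivt f s hf hsc hs_ne
      (fun x hx => by rw [hf2 x hx, hs2 x hx])
      (by convert hflim.div hslim one_ne_zero using 2 <;> norm_num)
    rw [this, hs0]
  refine ⟨hf0, ?_⟩
  -- g part
  set v := fun x : ℝ => ((x:ℂ) - A) * s x with hvdef
  have hvc : ContinuousOn v (Set.Ici 0) := (Continuous.continuousOn (by continuity)).mul hsc
  have hv_ne : ∀ x ∈ Set.Ici (0:ℝ), v x ≠ 0 := fun x hx =>
    mul_ne_zero (hd x) (hs_ne x hx)
  have hvsq : ∀ x ∈ Set.Ici (0:ℝ), g x ^ 2 = v x ^ 2 := by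
    intro x hx
    rw [hg2 x hx, hvdef]
    simp only
    rw [mul_pow, hs2 x hx, hwdef]
    simp only
    rw [mul_sub, mul_one, mul_div_cancel₀ _ (hd2 x)]
  have hinvlim : Tendsto (fun x : ℝ => ((x:ℂ) - A) / x) atTop (nhds 1) := by
    have h0 : Tendsto (fun x : ℝ => ((x⁻¹ : ℝ) : ℂ)) atTop (nhds 0) := by
      have := (Complex.continuous_ofReal.tendsto 0).comp tendsto_inv_atTop_zero
      simpa [Function.comp_def] using this
    have : Tendsto (fun x : ℝ => 1 - A * ((x⁻¹ : ℝ) : ℂ)) atTop (nhds 1) := by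
      have := (tendsto_const_nhds (x := (1:ℂ)) (f := atTop)).sub (h0.const_mul A)
      simpa using this
    apply this.congr'
    filter_upwards [eventually_gt_atTop (0:ℝ)] with x hx
    have hx0 : (x:ℂ) ≠ 0 := by exact_mod_cast hx.ne'
    push_cast
    field_simp
  have hvlim : Tendsto (fun x => g x / v x) atTop (nhds 1) := by
    have hmul : Tendsto (fun x : ℝ => (((x:ℂ) - A) / x) * s x) atTop (nhds 1) := by
      simpa using hinvlim.mul hslim
    have := hglim.div hmul one_ne_zero
    apply Tendsto.congr' ?_ (by simpa using this)
    filter_upwards [eventually_gt_atTop (0:ℝ)] with x hx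
    have hx0 : (x:ℂ) ≠ 0 := by exact_mod_cast hx.ne'
    simp only [Pi.div_apply, hvdef]
    field_simp
  have := aux_ivt g v hg hvc hv_ne hvsq hvlim
  rw [this, hvdef]
  simp [hs0]
end

section
/- Let A ∈ ℂ ∖ ℝ, n ∈ ℕ, and let Σ be a contour in ℂ ∖ [0,∞) given as the image of a piecewise-smooth curve t ↦ σ(t), t ∈ ℝ, with Re σ(t) → +∞ and |Im σ(t)| bounded as t → ±∞, passing around the origin (i.e., winding so that Σ together with [0,∞) encircles 0). Then for every k with 0 ≤ k ≤ n−1, ∫_Σ z^k L_n^{(α)}(z) z^α e^{−z} dz = 0, where z^α = exp(α log z) with arg z ∈ [0, 2π). -/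
open Finset

/-- Generalized Laguerre polynomial `L_n^{(α)}(z) = ∑_{k=0}^n C(n+α, n-k) (-z)^k / k!`,
where `C(n+α, m) = (n+α)(n+α-1)⋯(n+α-m+1)/m!` is the generalized binomial coefficient. -/
noncomputable def laguerre (n : ℕ) (α : ℂ) : Polynomial ℂ :=
  ∑ k ∈ Finset.range (n + 1),
    Polynomial.C ((∏ j ∈ Finset.range (n - k), ((n : ℂ) + α - j)) /
      (Nat.factorial (n - k) : ℂ) / (Nat.factorial k : ℂ)) * (-Polynomial.X) ^ k


open Filter MeasureTheory

/-- Branch of `log` with cut along `[0,∞)`, i.e. `arg z ∈ (0, 2π)` off the cut. -/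
noncomputable def logCut (z : ℂ) : ℂ := Complex.log (-z) + Real.pi * Complex.I

/-- `z^α = exp(α log z)` with `arg z ∈ [0, 2π)`. -/
noncomputable def cpowCut (β z : ℂ) : ℂ := Complex.exp (β * logCut z)

set_option maxHeartbeats 1000000

section LaguerreOrthogonalityAux
open Polynomial Topology

lemma fwd_diff_eval (R : Polynomial ℂ) (m : ℕ) :
    (R.comp (X + 1) - R).eval (m : ℂ) = R.eval ((m : ℂ) + 1) - R.eval (m : ℂ) := by
  simp [eval_comp]

lemma diff_natDegree_lt (R : Polynomial ℂ) (hR : R.comp (X + 1) - R ≠ 0) :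
    (R.comp (X + 1) - R).natDegree < R.natDegree := by
  have hR0 : R ≠ 0 := by rintro rfl; simp at hR
  have hdeg : (R.comp (X + 1)).natDegree = R.natDegree := by
    have : (X + 1 : ℂ[X]).natDegree = 1 := by
      simpa using natDegree_X_add_C (1 : ℂ)
    rw [natDegree_comp, this, mul_one]
  have hlc : (R.comp (X + 1)).leadingCoeff = R.leadingCoeff := by
    rw [leadingCoeff_comp (by rw [show (X+1:ℂ[X]) = X + C 1 by simp, natDegree_X_add_C]; omega)]
    simp [show (X+1:ℂ[X]) = X + C 1 by simp, leadingCoeff_X_add_C]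
  have hc0 : R.comp (X + 1) ≠ 0 := by
    intro h
    rw [h] at hlc
    exact hR0 (leadingCoeff_eq_zero.mp hlc.symm)
  have hdd : (R.comp (X + 1)).degree = R.degree := by
    rw [degree_eq_natDegree hc0, degree_eq_natDegree hR0, hdeg]
  have h2 := degree_sub_lt hdd hc0 hlc
  rw [hdd] at h2
  exact natDegree_lt_natDegree hR h2

lemma sum_alt_choose_eval (n : ℕ) (R : Polynomial ℂ) (h : R.natDegree < n) :
    ∑ m ∈ range (n + 1), (-1 : ℂ) ^ m * (n.choose m : ℂ) * R.eval (m : ℂ) = 0 := by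
  induction n generalizing R with
  | zero => omega
  | succ n ih =>
    set D := R.comp (X + 1) - R with hD
    have key : ∑ m ∈ range (n + 2), (-1 : ℂ) ^ m * ((n+1).choose m : ℂ) * R.eval (m : ℂ)
        = - ∑ m ∈ range (n + 1), (-1 : ℂ) ^ m * (n.choose m : ℂ) * D.eval (m : ℂ) := by
      have e1 : ∀ m : ℕ, D.eval (m : ℂ) = R.eval ((m : ℂ) + 1) - R.eval (m : ℂ) :=
        fwd_diff_eval R
      rw [Finset.sum_range_succ' _ (n + 1)]
      have e2 : ∀ i : ℕ, (-1:ℂ)^(i+1) * (((n+1).choose (i+1) : ℕ) : ℂ) * R.eval ((i:ℕ)+1 : ℂ)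
          = -((-1:ℂ)^i * (n.choose i : ℂ) * R.eval ((i:ℂ)+1))
            - (-1:ℂ)^i * (n.choose (i+1) : ℂ) * R.eval ((i:ℂ)+1) := by
        intro i
        rw [Nat.choose_succ_succ]
        push_cast
        ring
      calc (∑ i ∈ range (n+1), (-1:ℂ)^(i+1) * (((n+1).choose (i+1) : ℕ) : ℂ) * R.eval ((i+1 : ℕ) : ℂ))
            + (-1:ℂ)^0 * (((n+1).choose 0 : ℕ) : ℂ) * R.eval ((0:ℕ) : ℂ)
          = (∑ i ∈ range (n+1), (-((-1:ℂ)^i * (n.choose i : ℂ) * R.eval ((i:ℂ)+1))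
             - (-1:ℂ)^i * (n.choose (i+1) : ℂ) * R.eval ((i:ℂ)+1))) + R.eval 0 := by
            simp only [pow_zero, Nat.choose_zero_right, Nat.cast_one, one_mul, Nat.cast_zero]
            congr 1
            refine Finset.sum_congr rfl fun i _ => ?_
            rw [show ((i+1 : ℕ) : ℂ) = (i : ℂ) + 1 by push_cast; ring]
            exact e2 i
        _ = - ∑ m ∈ range (n + 1), (-1 : ℂ) ^ m * (n.choose m : ℂ) * D.eval (m : ℂ) := by
            simp only [e1]
            have e3 : ∑ i ∈ range (n+1), (-1:ℂ)^i * (n.choose (i+1) : ℂ) * R.eval ((i:ℂ)+1)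
                = ∑ i ∈ range n, (-1:ℂ)^i * (n.choose (i+1) : ℂ) * R.eval ((i:ℂ)+1) := by
              rw [Finset.sum_range_succ]
              simp
            have e4 : ∑ m ∈ range (n + 1), (-1 : ℂ) ^ m * (n.choose m : ℂ) * R.eval (m : ℂ)
                = (∑ i ∈ range n, (-1:ℂ)^(i+1) * (n.choose (i+1) : ℂ) * R.eval ((i:ℂ)+1))
                  + R.eval 0 := by
              rw [Finset.sum_range_succ' _ n]
              simp only [pow_zero, Nat.choose_zero_right, Nat.cast_one, one_mul, Nat.cast_zero]
              congr 1
              refine Finset.sum_congr rfl fun i _ => ?_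
              rw [show ((i+1 : ℕ) : ℂ) = (i : ℂ) + 1 by push_cast; ring]
            have e5 : ∑ i ∈ range n, (-1:ℂ)^(i+1) * (n.choose (i+1) : ℂ) * R.eval ((i:ℂ)+1)
                = - ∑ i ∈ range n, (-1:ℂ)^i * (n.choose (i+1) : ℂ) * R.eval ((i:ℂ)+1) := by
              rw [← Finset.sum_neg_distrib]
              exact Finset.sum_congr rfl fun i _ => by ring
            have eB : ∑ x ∈ range (n+1), (-1:ℂ)^x * (n.choose x : ℂ) * (R.eval ((x:ℂ)+1) - R.eval (x:ℂ))
                = (∑ x ∈ range (n+1), (-1:ℂ)^x * (n.choose x : ℂ) * R.eval ((x:ℂ)+1))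
                  - ∑ x ∈ range (n+1), (-1:ℂ)^x * (n.choose x : ℂ) * R.eval (x:ℂ) := by
              rw [← Finset.sum_sub_distrib]
              exact Finset.sum_congr rfl fun i _ => by ring
            have eA : ∑ x ∈ range (n+1), -((-1:ℂ)^x * (n.choose x : ℂ) * R.eval ((x:ℂ)+1))
                = - ∑ x ∈ range (n+1), (-1:ℂ)^x * (n.choose x : ℂ) * R.eval ((x:ℂ)+1) := by
              rw [Finset.sum_neg_distrib]
            rw [Finset.sum_sub_distrib, eA, eB, e4, e3, e5]
            ring
    rw [key]
    by_cases hD0 : D = 0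
    · simp [hD0]
    · rw [ih D (lt_of_lt_of_le (diff_natDegree_lt R hD0) (by omega))]
      simp

lemma prod_desc (α : ℂ) : ∀ (N : ℕ) (c : ℂ),
    ∏ j ∈ range N, (c + N + α - j) = ∏ i ∈ range N, (c + i + 1 + α) := by
  intro N
  induction N with
  | zero => simp
  | succ N ih =>
    intro c
    rw [Finset.prod_range_succ, Finset.prod_range_succ']
    have h1 : ∀ j ∈ range N, (c + (N+1 : ℕ) + α - j) = ((c+1) + (N:ℂ) + α - j) := by
      intro j _; push_cast; ring
    rw [Finset.prod_congr rfl h1, ih (c+1)]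
    have h2 : ∀ i ∈ range N, ((c+1) + (i:ℂ) + 1 + α) = (c + ((i+1 : ℕ) : ℂ) + 1 + α) := by
      intro i _; push_cast; ring
    rw [Finset.prod_congr rfl h2]
    push_cast
    ring

lemma laguerre_coeff (n : ℕ) (α : ℂ) (m : ℕ) (hm : m ≤ n) :
    (laguerre n α).coeff m =
      (-1)^m * ((∏ j ∈ range (n - m), ((n:ℂ) + α - j)) / ((n-m).factorial : ℂ) / (m.factorial : ℂ)) := by
  rw [laguerre, finset_sum_coeff]
  have h : ∀ i ∈ range (n+1),
      (Polynomial.C ((∏ j ∈ Finset.range (n - i), ((n : ℂ) + α - j)) /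
        ((n - i).factorial : ℂ) / (i.factorial : ℂ)) * (-Polynomial.X) ^ i).coeff m
      = if i = m then (-1)^m * ((∏ j ∈ range (n - m), ((n:ℂ) + α - j)) /
          ((n-m).factorial : ℂ) / (m.factorial : ℂ)) else 0 := by
    intro i _
    rw [neg_pow, show ((-1 : ℂ[X])^i * X^i) = Polynomial.C ((-1:ℂ)^i) * X^i by simp [map_pow], ← mul_assoc, ← Polynomial.C_mul, coeff_C_mul, coeff_X_pow]
    by_cases h : i = m
    · subst h; simp; ring
    · simp [h, Ne.symm h]
  rw [Finset.sum_congr rfl h, Finset.sum_ite_eq' (range (n+1)) m]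
  simp [Nat.lt_succ, hm]

lemma key_sum (α : ℂ) (n k : ℕ) (hk : k < n) :
    ∑ j ∈ range (n + k + 1), (X^(k+1) * laguerre n α).coeff (j+1) *
      (∏ i ∈ range j, ((i:ℂ) + 1 + α)) = 0 := by
  have hnk : n + k + 1 = k + (n + 1) := by omega
  rw [hnk, Finset.sum_range_add]
  have hz : ∀ j ∈ range k, (X^(k+1) * laguerre n α).coeff (j+1) *
      (∏ i ∈ range j, ((i:ℂ) + 1 + α)) = 0 := by
    intro j hj
    rw [mul_comm (X^(k+1)), coeff_mul_X_pow', if_neg (by simp at hj; omega)]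
    ring
  rw [Finset.sum_eq_zero hz, zero_add]
  set R : ℂ[X] := ∏ t ∈ range k, (X + Polynomial.C ((t:ℂ) + 1 + α)) with hR
  have hRdeg : R.natDegree = k := by
    rw [hR, natDegree_prod_of_monic _ _ (fun i _ => monic_X_add_C _)]
    rw [Finset.sum_congr rfl (fun (i : ℕ) _ => natDegree_X_add_C ((i:ℂ) + 1 + α))]
    simp
  have hterm : ∀ m ∈ range (n+1), (X^(k+1) * laguerre n α).coeff (k + m + 1) *
      (∏ i ∈ range (k + m), ((i:ℂ) + 1 + α))
      = (∏ i ∈ range n, ((i:ℂ) + 1 + α)) / (n.factorial : ℂ) *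
        ((-1)^m * (n.choose m : ℂ) * R.eval (m : ℂ)) := by
    intro m hm
    rw [Finset.mem_range, Nat.lt_succ] at hm
    rw [mul_comm (X^(k+1)), coeff_mul_X_pow', if_pos (by omega),
      show k + m + 1 - (k+1) = m by omega, laguerre_coeff n α m hm]
    -- rewrite descending product
    have e1 : ∏ j ∈ range (n - m), ((n:ℂ) + α - j)
        = ∏ i ∈ range (n - m), ((m:ℂ) + i + 1 + α) := by
      have := prod_desc α (n - m) (m : ℂ)
      have hcast : ((m:ℂ) + ((n - m : ℕ) : ℂ)) = (n : ℂ) := by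
        rw [Nat.cast_sub hm]; ring
      calc ∏ j ∈ range (n - m), ((n:ℂ) + α - j)
          = ∏ j ∈ range (n - m), ((m:ℂ) + ((n-m:ℕ):ℂ) + α - j) := by
            refine Finset.prod_congr rfl fun j _ => ?_
            rw [show (m:ℂ) + ((n-m:ℕ):ℂ) + α - j = ((m:ℂ) + ((n-m:ℕ):ℂ)) + α - j by ring, hcast]
        _ = ∏ i ∈ range (n - m), ((m:ℂ) + i + 1 + α) := this
    -- split u (k+m)
    have e2 : ∏ i ∈ range (k + m), ((i:ℂ) + 1 + α)
        = (∏ i ∈ range m, ((i:ℂ) + 1 + α)) * ∏ t ∈ range k, ((m:ℂ) + t + 1 + α) := by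
      rw [show k + m = m + k by omega, Finset.prod_range_add]
      congr 1
      refine Finset.prod_congr rfl fun t _ => ?_
      push_cast; ring
    have e3 : (∏ i ∈ range (n - m), ((m:ℂ) + i + 1 + α)) * ∏ i ∈ range m, ((i:ℂ) + 1 + α)
        = ∏ i ∈ range n, ((i:ℂ) + 1 + α) := by
      have h5 := Finset.prod_range_add (fun i => ((i:ℂ) + 1 + α)) m (n - m)
      rw [show m + (n - m) = n by omega] at h5
      rw [h5, mul_comm]
      congr 1
      refine Finset.prod_congr rfl fun i _ => ?_
      push_cast; ring
    have e4 : R.eval (m : ℂ) = ∏ t ∈ range k, ((m:ℂ) + t + 1 + α) := by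
      rw [hR, eval_prod]
      refine Finset.prod_congr rfl fun t _ => ?_
      simp; ring
    have hfac : ((n.choose m : ℂ)) * (m.factorial : ℂ) * ((n-m).factorial : ℂ) = (n.factorial : ℂ) := by
      exact_mod_cast congrArg (Nat.cast (R := ℂ)) (Nat.choose_mul_factorial_mul_factorial hm)
    have hm0 : (m.factorial : ℂ) ≠ 0 := Nat.cast_ne_zero.mpr (Nat.factorial_ne_zero m)
    have hnm0 : ((n-m).factorial : ℂ) ≠ 0 := Nat.cast_ne_zero.mpr (Nat.factorial_ne_zero _)
    have hn0 : (n.factorial : ℂ) ≠ 0 := Nat.cast_ne_zero.mpr (Nat.factorial_ne_zero n)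
    rw [e1, e2, e4, ← e3]
    field_simp
    linear_combination (-((∏ x ∈ range m, ((x:ℂ) + 1 + α)) *
      (∏ x ∈ range k, ((m:ℂ) + x + 1 + α)) *
      (∏ x ∈ range (n - m), ((m:ℂ) + x + 1 + α)))) * hfac
  rw [Finset.sum_congr rfl hterm, ← Finset.mul_sum,
    sum_alt_choose_eval n R (by rw [hRdeg]; exact hk), mul_zero]

lemma exists_anti (α : ℂ) : ∀ (N : ℕ) (Q : Polynomial ℂ), Q.natDegree ≤ N + 1 → Q.coeff 0 = 0 →
    (∑ j ∈ range (N+1), Q.coeff (j+1) * ∏ i ∈ range j, ((i:ℂ)+1+α)) = 0 →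
    ∃ P : Polynomial ℂ, X * P.derivative + (Polynomial.C α - X) * P = Q := by
  intro N
  induction N with
  | zero =>
    intro Q hdeg h0 hsum
    refine ⟨0, ?_⟩
    simp only [derivative_zero, mul_zero, zero_mul, add_zero, mul_zero]
    symm
    ext m
    match m with
    | 0 => simpa using h0
    | 1 => simpa using hsum
    | (m+2) => simpa using coeff_eq_zero_of_natDegree_lt (lt_of_le_of_lt hdeg (by omega))
  | succ N ih =>
    intro Q hdeg h0 hsum
    set c : ℂ := -Q.coeff (N+2) with hc
    set A : ℂ[X] := Polynomial.C (c * (((N:ℂ)+1)+α)) * X^(N+1) with hA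
    set B : ℂ[X] := Polynomial.C c * X^(N+2) with hB
    set P₀ : ℂ[X] := Polynomial.C c * X^(N+1) with hP₀
    have hT0 : X * P₀.derivative + (Polynomial.C α - X) * P₀ = A - B := by
      rw [hP₀, hA, hB, derivative_C_mul, derivative_X_pow]
      push_cast
      simp only [map_mul, map_add, map_natCast, map_one]
      ring
    set Q' : ℂ[X] := Q - A + B with hQ'
    have hcoeffA : ∀ m : ℕ, A.coeff m = if m = N+1 then c * (((N:ℂ)+1)+α) else 0 := by
      intro m
      rw [hA, coeff_C_mul, coeff_X_pow]
      split_ifs <;> simp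
    have hcoeffB : ∀ m : ℕ, B.coeff m = if m = N+2 then c else 0 := by
      intro m
      rw [hB, coeff_C_mul, coeff_X_pow]
      split_ifs <;> simp
    have hc2 : Q'.coeff (N+2) = 0 := by
      rw [hQ', coeff_add, coeff_sub, hcoeffA, hcoeffB]
      simp [hc]
    have hdeg' : Q'.natDegree ≤ N + 1 := by
      rw [natDegree_le_iff_coeff_eq_zero]
      intro m hm
      rcases eq_or_lt_of_le (show N + 2 ≤ m by omega) with h | h
      · rw [← h]; exact hc2
      · rw [hQ', coeff_add, coeff_sub, hcoeffA, hcoeffB,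
          coeff_eq_zero_of_natDegree_lt (lt_of_le_of_lt hdeg h),
          if_neg (by omega), if_neg (by omega)]
        ring
    have h0' : Q'.coeff 0 = 0 := by
      rw [hQ', coeff_add, coeff_sub, hcoeffA, hcoeffB, h0, if_neg (by omega), if_neg (by omega)]
      ring
    have hsum' : ∑ j ∈ range (N+1), Q'.coeff (j+1) * ∏ i ∈ range j, ((i:ℂ)+1+α) = 0 := by
      have hs2 : ∑ j ∈ range (N+2), Q'.coeff (j+1) * ∏ i ∈ range j, ((i:ℂ)+1+α)
          = (∑ j ∈ range (N+1), Q'.coeff (j+1) * ∏ i ∈ range j, ((i:ℂ)+1+α))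
            + Q'.coeff (N+2) * ∏ i ∈ range (N+1), ((i:ℂ)+1+α) := by
        rw [Finset.sum_range_succ]
      have expand : ∀ j ∈ range (N+2), Q'.coeff (j+1) * ∏ i ∈ range j, ((i:ℂ)+1+α)
          = Q.coeff (j+1) * ∏ i ∈ range j, ((i:ℂ)+1+α)
            - (if j = N then (c * (((N:ℂ)+1)+α)) * ∏ i ∈ range N, ((i:ℂ)+1+α) else 0)
            + (if j = N+1 then c * ∏ i ∈ range (N+1), ((i:ℂ)+1+α) else 0) := by
        intro j _
        rw [hQ', coeff_add, coeff_sub, hcoeffA, hcoeffB]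
        rcases eq_or_ne j N with rfl | hjN
        · rw [if_pos rfl, if_pos rfl, if_neg (by omega), if_neg (by omega)]
          ring
        · rcases eq_or_ne j (N+1) with rfl | hjN1
          · rw [if_pos rfl, if_pos rfl, if_neg (by omega), if_neg (by omega)]
            ring
          · rw [if_neg (by omega), if_neg (by omega), if_neg hjN, if_neg hjN1]
            ring
      rw [Finset.sum_congr rfl expand, Finset.sum_add_distrib, Finset.sum_sub_distrib,
        Finset.sum_ite_eq' (range (N+2)) N, Finset.sum_ite_eq' (range (N+2)) (N+1),
        if_pos (by simp), if_pos (by simp), hsum, Finset.prod_range_succ] at hs2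
      rw [hc2] at hs2
      simp only [zero_mul, add_zero, zero_sub] at hs2
      rw [← hs2]
      ring
    obtain ⟨P', hP'⟩ := ih Q' hdeg' h0' hsum'
    refine ⟨P' + P₀, ?_⟩
    have hsplit : X * (P' + P₀).derivative + (Polynomial.C α - X) * (P' + P₀)
        = (X * P'.derivative + (Polynomial.C α - X) * P')
          + (X * P₀.derivative + (Polynomial.C α - X) * P₀) := by
      rw [derivative_add]; ring
    rw [hsplit, hP', hT0, hQ']
    ring

section Analytic

variable (α : ℂ) (P : Polynomial ℂ)

/-- The antiderivative. -/
noncomputable def FF (α : ℂ) (P : Polynomial ℂ) (z : ℂ) : ℂ :=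
  P.eval z * cpowCut α z * Complex.exp (-z)

lemma hasDerivAt_FF {z : ℂ} (hz : ¬(z.im = 0 ∧ 0 ≤ z.re)) :
    HasDerivAt (FF α P)
      ((P.derivative.eval z * cpowCut α z + P.eval z * (cpowCut α z * (α * z⁻¹)))
          * Complex.exp (-z) + P.eval z * cpowCut α z * (Complex.exp (-z) * (-1))) z := by
  have hz0 : z ≠ 0 := by
    rintro rfl; exact hz ⟨rfl, le_refl 0⟩
  have hslit : -z ∈ Complex.slitPlane := by
    rw [Complex.mem_slitPlane_iff]
    push_neg at hz
    rcases eq_or_ne z.im 0 with h | h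
    · left
      have := hz h
      simp only [Complex.neg_re]
      linarith
    · right
      simpa using h
  have hneg : HasDerivAt (fun w : ℂ => -w) (-1) z := (hasDerivAt_id z).neg
  have h1 : HasDerivAt (fun w : ℂ => Complex.log (-w)) ((-z)⁻¹ * (-1)) z :=
    (Complex.hasDerivAt_log hslit).comp z hneg
  have hlog : HasDerivAt logCut z⁻¹ z := by
    have h2 := h1.add_const ((Real.pi : ℂ) * Complex.I)
    have h3 : (-z)⁻¹ * (-1) = z⁻¹ := by
      rw [inv_neg]; ring
    rw [h3] at h2
    exact h2
  have hcpow : HasDerivAt (cpowCut α) (cpowCut α z * (α * z⁻¹)) z := by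
    have := (hlog.const_mul α).cexp
    exact this
  have hexp : HasDerivAt (fun w : ℂ => Complex.exp (-w)) (Complex.exp (-z) * (-1)) z :=
    hneg.cexp
  exact ((P.hasDerivAt z).mul hcpow).mul hexp

lemma FF_deriv_eq {z : ℂ} (hz0 : z ≠ 0) {n k : ℕ}
    (hP : X * P.derivative + (Polynomial.C α - X) * P = X^(k+1) * laguerre n α) :
    (P.derivative.eval z * cpowCut α z + P.eval z * (cpowCut α z * (α * z⁻¹)))
        * Complex.exp (-z) + P.eval z * cpowCut α z * (Complex.exp (-z) * (-1))
      = z ^ k * (laguerre n α).eval z * cpowCut α z * Complex.exp (-z) := by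
  have heval := congrArg (Polynomial.eval z) hP
  simp only [eval_add, eval_mul, eval_sub, eval_X, eval_C, eval_pow] at heval
  have hzz : z * z⁻¹ = 1 := mul_inv_cancel₀ hz0
  linear_combination (cpowCut α z * Complex.exp (-z) * z⁻¹) * heval - ((P.derivative.eval z - P.eval z - z ^ k * (laguerre n α).eval z) * cpowCut α z * Complex.exp (-z)) * hzz

lemma FF_norm_le (M : ℝ) (hM : 0 ≤ M) (z : ℂ) (h1 : 1 ≤ z.re) (hzM : |z.im| ≤ M) :
    ‖FF α P z‖ ≤ ((∑ i ∈ range (P.natDegree + 1), ‖P.coeff i‖) * Real.exp (2 * Real.pi * |α.im|))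
      * (z.re + M) ^ (P.natDegree + ⌈α.re⌉₊) * Real.exp (-z.re) := by
  have habs1 : (1 : ℝ) ≤ ‖z‖ := le_trans h1 (le_trans (le_abs_self _) (Complex.abs_re_le_norm z))
  have hle : ‖z‖ ≤ z.re + M := by
    refine (Complex.norm_le_abs_re_add_abs_im z).trans ?_
    rw [abs_of_pos (by linarith : (0:ℝ) < z.re)]
    linarith
  have hrenn : (1:ℝ) ≤ z.re + M := by linarith
  have hPz : ‖P.eval z‖ ≤ (∑ i ∈ range (P.natDegree + 1), ‖P.coeff i‖) * (z.re + M) ^ P.natDegree := by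
    rw [Polynomial.eval_eq_sum_range]
    refine (norm_sum_le _ _).trans ?_
    rw [Finset.sum_mul]
    refine Finset.sum_le_sum fun i hi => ?_
    rw [norm_mul, norm_pow]
    refine mul_le_mul_of_nonneg_left ?_ (norm_nonneg _)
    calc ‖z‖ ^ i ≤ ‖z‖ ^ P.natDegree :=
          pow_le_pow_right₀ habs1 (by simpa [Nat.lt_succ] using hi)
      _ ≤ (z.re + M) ^ P.natDegree := pow_le_pow_left₀ (by positivity) hle _
  have hcp : ‖cpowCut α z‖ ≤ (z.re + M) ^ (⌈α.re⌉₊) * Real.exp (2 * Real.pi * |α.im|) := by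
    rw [cpowCut, Complex.norm_exp]
    have hre : (α * logCut z).re = α.re * Real.log ‖z‖ - α.im * (logCut z).im := by
      rw [Complex.mul_re]
      congr 2
      rw [logCut, Complex.add_re, Complex.log_re, norm_neg]
      simp
    have him : 0 ≤ (logCut z).im ∧ (logCut z).im ≤ 2 * Real.pi := by
      rw [logCut, Complex.add_im, Complex.log_im]
      constructor
      · have := Complex.neg_pi_lt_arg (-z)
        simp only [Complex.mul_im, Complex.I_im, Complex.I_re, Complex.ofReal_re,
          Complex.ofReal_im]
        nlinarith [Real.pi_pos]
      · have := Complex.arg_le_pi (-z)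
        simp only [Complex.mul_im, Complex.I_im, Complex.I_re, Complex.ofReal_re,
          Complex.ofReal_im]
        nlinarith [Real.pi_pos]
    have hstep : (α * logCut z).re ≤ α.re * Real.log ‖z‖ + 2 * Real.pi * |α.im| := by
      rw [hre]
      have : -(α.im * (logCut z).im) ≤ |α.im| * (2 * Real.pi) := by
        calc -(α.im * (logCut z).im) ≤ |α.im * (logCut z).im| := neg_le_abs _
          _ = |α.im| * |(logCut z).im| := abs_mul _ _
          _ ≤ |α.im| * (2 * Real.pi) := by
              refine mul_le_mul_of_nonneg_left ?_ (abs_nonneg _)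
              rw [abs_of_nonneg him.1]; exact him.2
      linarith
    calc Real.exp ((α * logCut z).re)
        ≤ Real.exp (α.re * Real.log ‖z‖ + 2 * Real.pi * |α.im|) :=
          Real.exp_le_exp.mpr hstep
      _ = Real.exp (α.re * Real.log ‖z‖) * Real.exp (2 * Real.pi * |α.im|) :=
          Real.exp_add _ _
      _ ≤ (z.re + M) ^ (⌈α.re⌉₊) * Real.exp (2 * Real.pi * |α.im|) := by
          refine mul_le_mul_of_nonneg_right ?_ (Real.exp_pos _).le
          have h4 : Real.exp (α.re * Real.log ‖z‖) = ‖z‖ ^ α.re := by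
            rw [Real.rpow_def_of_pos (by linarith), mul_comm]
          rw [h4]
          calc ‖z‖ ^ α.re ≤ ‖z‖ ^ ((⌈α.re⌉₊ : ℝ)) :=
                Real.rpow_le_rpow_of_exponent_le habs1 (Nat.le_ceil _)
            _ = ‖z‖ ^ (⌈α.re⌉₊ : ℕ) := Real.rpow_natCast _ _
            _ ≤ (z.re + M) ^ (⌈α.re⌉₊ : ℕ) := pow_le_pow_left₀ (by positivity) hle _
  have hex : ‖Complex.exp (-z)‖ = Real.exp (-z.re) := by
    rw [Complex.norm_exp, Complex.neg_re]
  rw [FF, norm_mul, norm_mul, hex, pow_add]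
  calc ‖P.eval z‖ * ‖cpowCut α z‖ * Real.exp (-z.re)
      ≤ ((∑ i ∈ range (P.natDegree + 1), ‖P.coeff i‖) * (z.re + M) ^ P.natDegree)
        * ((z.re + M) ^ (⌈α.re⌉₊) * Real.exp (2 * Real.pi * |α.im|)) * Real.exp (-z.re) := by
        refine mul_le_mul_of_nonneg_right (mul_le_mul hPz hcp (norm_nonneg _) (by positivity)) (Real.exp_pos _).le
    _ = ((∑ i ∈ range (P.natDegree + 1), ‖P.coeff i‖) * Real.exp (2 * Real.pi * |α.im|))
        * ((z.re + M) ^ P.natDegree * (z.re + M) ^ (⌈α.re⌉₊)) * Real.exp (-z.re) := by ring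

end Analytic

lemma exists_anti_laguerre (α : ℂ) (n k : ℕ) (hk : k < n) :
    ∃ P : Polynomial ℂ, X * P.derivative + (Polynomial.C α - X) * P
      = X^(k+1) * laguerre n α := by
  refine exists_anti α (n+k) _ ?_ ?_ (key_sum α n k hk)
  · refine natDegree_mul_le.trans ?_
    rw [natDegree_pow, natDegree_X, mul_one]
    have h : (laguerre n α).natDegree ≤ n := by
      refine natDegree_sum_le_of_forall_le _ _ fun i hi => ?_
      refine (natDegree_C_mul_le _ _).trans ?_
      rw [natDegree_pow, natDegree_neg, natDegree_X, mul_one]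
      simpa [Nat.lt_succ] using hi
    omega
  · rw [mul_comm, coeff_mul_X_pow']
    simp

end LaguerreOrthogonalityAux

open Polynomial Topology in
/-- Orthogonality of the generalized Laguerre polynomials with non-real parameter `α`
along a contour `σ` in `ℂ ∖ [0,∞)` whose both ends go to `+∞` with bounded imaginary
part, passing around the origin: `∫_Σ z^k L_n^{(α)}(z) z^α e^{−z} dz = 0` for `k < n`. -/
theorem laguerre_orthogonality (α : ℂ) (hα : α.im ≠ 0) (n k : ℕ) (hk : k < n)
    (σ : ℝ → ℂ) (hσ : ContDiff ℝ 1 σ)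
    (hcut : ∀ t : ℝ, ¬((σ t).im = 0 ∧ 0 ≤ (σ t).re))
    (hre₁ : Tendsto (fun t => (σ t).re) atTop atTop)
    (hre₂ : Tendsto (fun t => (σ t).re) atBot atTop)
    (him : ∃ M : ℝ, ∀ t : ℝ, |(σ t).im| ≤ M)
    (hwind : ∃ T : ℝ, (∀ t ≥ T, 0 < (σ t).im) ∧ (∀ t ≤ -T, (σ t).im < 0)) :
    ∫ t : ℝ, (σ t) ^ k * (laguerre n α).eval (σ t) * cpowCut α (σ t) *
      Complex.exp (-(σ t)) * deriv σ t = 0 := by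
  obtain ⟨P, hP⟩ := exists_anti_laguerre α n k hk
  obtain ⟨M₀, hM₀⟩ := him
  set M : ℝ := max M₀ 0 with hMdef
  have hMnn : (0:ℝ) ≤ M := le_max_right _ _
  set g : ℝ → ℂ := fun t => (σ t) ^ k * (laguerre n α).eval (σ t) * cpowCut α (σ t) *
      Complex.exp (-(σ t)) * deriv σ t with hg
  set F : ℝ → ℂ := fun t => P.eval (σ t) * cpowCut α (σ t) * Complex.exp (-(σ t)) with hF
  have hder : ∀ t : ℝ, HasDerivAt F (g t) t := by
    intro t
    have hσt : HasDerivAt σ (deriv σ t) t := ((hσ.differentiable one_ne_zero) t).hasDerivAt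
    have h1 := (hasDerivAt_FF α P (hcut t)).comp t hσt
    have hz0 : σ t ≠ 0 := by
      intro h
      exact hcut t (by rw [h]; exact ⟨rfl, le_refl 0⟩)
    rw [FF_deriv_eq α P hz0 hP] at h1
    exact h1
  have key : ∀ (l : Filter ℝ), Tendsto (fun t => (σ t).re) l atTop →
      Tendsto F l (𝓝 0) := by
    intro l hl
    set CC : ℝ := ((∑ i ∈ range (P.natDegree + 1), ‖P.coeff i‖) *
      Real.exp (2 * Real.pi * |α.im|)) with hCC
    set q : ℕ := P.natDegree + ⌈α.re⌉₊ with hq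
    refine squeeze_zero_norm' (a := fun t => CC * ((σ t).re + M) ^ q * Real.exp (-(σ t).re)) ?_ ?_
    · refine (hl.eventually_ge_atTop 1).mono fun t ht => ?_
      exact FF_norm_le α P M hMnn (σ t) ht (le_trans (hM₀ t) (le_max_left _ _))
    · have h3 : Tendsto (fun x : ℝ => (x + M) ^ q * Real.exp (-(x + M))) atTop (𝓝 0) :=
        (Real.tendsto_pow_mul_exp_neg_atTop_nhds_zero q).comp
          (tendsto_atTop_add_const_right atTop M tendsto_id)
      have h4 := h3.const_mul (CC * Real.exp M)
      rw [mul_zero] at h4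
      have h5 : Tendsto (fun x : ℝ => CC * (x + M) ^ q * Real.exp (-x)) atTop (𝓝 0) := by
        refine h4.congr fun x => ?_
        rw [show -(x + M) = -x + -M by ring, Real.exp_add]
        have hMM : Real.exp M * Real.exp (-M) = 1 := by rw [← Real.exp_add]; simp
        linear_combination (CC * (x + M) ^ q * Real.exp (-x)) * hMM
      exact h5.comp hl
  by_cases hint : Integrable g
  · have := integral_of_hasDerivAt_of_tendsto hder hint (key atBot hre₂) (key atTop hre₁)
    simpa using this
  · exact integral_undef hint
end
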